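/- Let (Ω, P) be a probability space, d, D ≥ 1, and let u_1, …, u_D : Ω → ℝ^d be independent identically distributed random vectors. For v ∈ ℝ^d define Ĝ(v) = (1/D)·Σ_{i=1}^D cos(⟨u_i, v⟩) and G(v) = E[cos(⟨u_1, v⟩)]. Fix x_1, x_2, x_1', x_2' ∈ ℝ^d and define the pairwise kernel values k = G(x_1 − x_1') + G(x_2 − x_2') − G(x_1 − x_2') − G(x_2 − x_1') and k̂ = Ĝ(x_1 − x_1') + Ĝ(x_2 − x_2') − Ĝ(x_1 − x_2') − Ĝ(x_2 − x_1'). Then for every ε > 0: P(|k̂ − k| ≥ ε) ≤ 8·exp(−D·ε²/32). -/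

import Mathlib

open scoped RealInnerProductSpace
open MeasureTheory ProbabilityTheory Real

section AuxHoeffding


lemma hoeff_key {p : ℝ} (hp0 : 0 ≤ p) (hp1 : p ≤ 1) (h : ℝ) :
    (1 - p) + p * exp h ≤ exp (p * h + h ^ 2 / 8) := by
  set fp : ℝ → ℝ := fun t => 1 - p + p * exp t with hfp
  have hfpos : ∀ t, 0 < fp t := by
    intro t
    rcases eq_or_lt_of_le hp1 with h1 | h1
    · simp [hfp, ← h1]; positivity
    · have : 0 < 1 - p := by linarith
      have : 0 ≤ p * exp t := by positivity
      simp only [hfp]; linarith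
  set Q : ℝ → ℝ := fun t => p * exp t / fp t with hQ
  have hQ0 : ∀ t, 0 ≤ Q t := fun t => div_nonneg (by positivity) (hfpos t).le
  have hQ1 : ∀ t, Q t ≤ 1 := by
    intro t
    rw [hQ, div_le_one (hfpos t)]
    simp only [hfp]; linarith
  have hfd : ∀ t, HasDerivAt fp (p * exp t) t := by
    intro t
    exact ((Real.hasDerivAt_exp t).const_mul p).const_add (1 - p)
  have hQd : ∀ t, HasDerivAt Q (Q t * (1 - Q t)) t := by
    intro t
    have := ((Real.hasDerivAt_exp t).const_mul p).div (hfd t) (hfpos t).ne'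
    refine this.congr_deriv ?_
    have h2 : fp t ≠ 0 := (hfpos t).ne'
    simp only [hQ]
    field_simp [hQ, hfp]
  -- g t = t/4 - Q t + p is monotone
  set g : ℝ → ℝ := fun t => t / 4 - Q t + p with hg
  have hgd : ∀ t, HasDerivAt g (1 / 4 - Q t * (1 - Q t)) t := by
    intro t
    exact ((hasDerivAt_id t).div_const 4 |>.sub (hQd t)).add_const p
  have hgmono : Monotone g := by
    refine monotone_of_deriv_nonneg (fun t => (hgd t).differentiableAt) (fun t => ?_)
    rw [(hgd t).deriv]
    nlinarith [hQ0 t, hQ1 t, sq_nonneg (Q t - 1/2)]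
  have hg0 : g 0 = 0 := by
    simp [hg, hQ, hfp]
  -- L t = log (fp t) - p * t
  set L : ℝ → ℝ := fun t => Real.log (fp t) - p * t with hL
  have hLd : ∀ t, HasDerivAt L (Q t - p) t := by
    intro t
    have h1 : HasDerivAt (fun t => Real.log (fp t)) (p * exp t / fp t) t :=
      (hfd t).log (hfpos t).ne'
    have h3 := h1.sub ((hasDerivAt_id t).const_mul p); rw [mul_one] at h3; exact h3
  set M : ℝ → ℝ := fun t => t ^ 2 / 8 - L t with hM
  have hMd : ∀ t, HasDerivAt M (g t) t := by
    intro t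
    have h1 : HasDerivAt (fun t : ℝ => t ^ 2 / 8) (t / 4) t := by
      refine ((hasDerivAt_pow 2 t).div_const 8).congr_deriv ?_
      ring
    have := h1.sub (hLd t)
    refine this.congr_deriv ?_
    simp [hg]; ring
  have hM0 : M 0 = 0 := by simp [hM, hL, hfp]
  have hMnonneg : 0 ≤ M h := by
    rcases le_or_gt 0 h with hh | hh
    · have : MonotoneOn M (Set.Ici 0) := by
        refine monotoneOn_of_deriv_nonneg (convex_Ici 0)
          ((Differentiable.continuous fun t => (hMd t).differentiableAt).continuousOn)
          (fun t _ => (hMd t).differentiableAt.differentiableWithinAt) (fun t ht => ?_)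
        rw [(hMd t).deriv]
        have : (0:ℝ) ≤ t := le_of_lt (by simpa using ht)
        calc (0:ℝ) = g 0 := hg0.symm
          _ ≤ g t := hgmono this
      have := this (Set.mem_Ici.2 le_rfl) (Set.mem_Ici.2 hh) hh
      linarith [hM0]
    · have : AntitoneOn M (Set.Iic 0) := by
        refine antitoneOn_of_deriv_nonpos (convex_Iic 0)
          ((Differentiable.continuous fun t => (hMd t).differentiableAt).continuousOn)
          (fun t _ => (hMd t).differentiableAt.differentiableWithinAt) (fun t ht => ?_)
        rw [(hMd t).deriv]
        have ht0 : t ≤ 0 := le_of_lt (by simpa using ht)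
        calc g t ≤ g 0 := hgmono ht0
          _ = 0 := hg0
      have := this (Set.mem_Iic.2 hh.le) (Set.mem_Iic.2 le_rfl) hh.le
      linarith [hM0]
  have hlog : Real.log (fp h) ≤ p * h + h ^ 2 / 8 := by
    simp only [hM, hL] at hMnonneg; linarith
  calc fp h = exp (Real.log (fp h)) := (Real.exp_log (hfpos h)).symm
    _ ≤ exp (p * h + h ^ 2 / 8) := Real.exp_le_exp.2 hlog

variable {Ω : Type*} [MeasurableSpace Ω] {P : Measure Ω} [IsProbabilityMeasure P]



lemma integrable_of_bdd {X : Ω → ℝ} (hX : Measurable X) {C : ℝ} (hC : ∀ ω, |X ω| ≤ C) :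
    Integrable X P :=
  ⟨hX.aestronglyMeasurable,
    MeasureTheory.HasFiniteIntegral.of_bounded (C := C) (ae_of_all _ fun ω => by
      simpa using hC ω)⟩

lemma mgf_le_of_bdd {X : Ω → ℝ} (hX : Measurable X) (hb : ∀ ω, |X ω| ≤ 1) (t : ℝ) :
    mgf X P t ≤ exp (t * (P[X]) + t ^ 2 / 2) := by
  set m := P[X] with hm
  have hint : Integrable X P := integrable_of_bdd hX hb
  have hmb : |m| ≤ 1 := by
    have h1 : |m| ≤ ∫ ω, |X ω| ∂P := by
      simpa [Real.norm_eq_abs] using norm_integral_le_integral_norm (fun ω => X ω) (μ := P)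
    have h2 : ∫ ω, |X ω| ∂P ≤ ∫ (_ : Ω), (1:ℝ) ∂P :=
      integral_mono hint.abs (integrable_const 1) fun ω => hb ω
    simpa using h1.trans h2
  set c1 : ℝ := (exp (-t) + exp t) / 2 with hc1
  set c2 : ℝ := (exp t - exp (-t)) / 2 with hc2
  have hpt : ∀ ω, exp (t * X ω) ≤ c1 + c2 * X ω := by
    intro ω
    have hx1 : -1 ≤ X ω := neg_le_of_abs_le (hb ω)
    have hx2 : X ω ≤ 1 := le_of_abs_le (hb ω)
    have := convexOn_exp.2 (Set.mem_univ (-t)) (Set.mem_univ t)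
      (show (0:ℝ) ≤ (1 - X ω) / 2 by linarith) (show (0:ℝ) ≤ (1 + X ω) / 2 by linarith)
      (by ring)
    simp only [smul_eq_mul] at this
    calc exp (t * X ω) = exp ((1 - X ω) / 2 * (-t) + (1 + X ω) / 2 * t) := by ring_nf
      _ ≤ (1 - X ω) / 2 * exp (-t) + (1 + X ω) / 2 * exp t := this
      _ = c1 + c2 * X ω := by rw [hc1, hc2]; ring
  have hintexp : Integrable (fun ω => exp (t * X ω)) P := by
    refine integrable_of_bdd (by fun_prop) (C := exp |t|) fun ω => ?_
    rw [abs_of_pos (exp_pos _)]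
    refine exp_le_exp.2 ?_
    calc t * X ω ≤ |t * X ω| := le_abs_self _
      _ = |t| * |X ω| := abs_mul _ _
      _ ≤ |t| * 1 := by gcongr; exact hb ω
      _ = |t| := mul_one _
  have hstep : mgf X P t ≤ c1 + c2 * m := by
    calc mgf X P t = ∫ ω, exp (t * X ω) ∂P := rfl
      _ ≤ ∫ ω, (c1 + c2 * X ω) ∂P :=
          integral_mono hintexp ((integrable_const c1).add (hint.const_mul c2)) hpt
      _ = c1 + c2 * m := by
          rw [integral_add (integrable_const c1) (hint.const_mul c2), integral_const,
            integral_const_mul]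
          simp [hm]
  refine hstep.trans ?_
  have hp0 : 0 ≤ (1 + m) / 2 := by have := neg_le_of_abs_le hmb; linarith
  have hp1 : (1 + m) / 2 ≤ 1 := by have := le_of_abs_le hmb; linarith
  have key := hoeff_key hp0 hp1 (2 * t)
  have hmul := mul_le_mul_of_nonneg_left key (exp_pos (-t)).le
  calc c1 + c2 * m
      = exp (-t) * ((1 - (1 + m) / 2) + (1 + m) / 2 * exp (2 * t)) := by
        rw [hc1, hc2]
        have : exp (2 * t) = exp t * exp t := by rw [← exp_add]; ring_nf
        have h2 : exp (-t) * exp t = 1 := by rw [← exp_add]; simp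
        rw [this]
        linear_combination (-((1 + m) / 2 * exp t)) * h2
    _ ≤ exp (-t) * exp ((1 + m) / 2 * (2 * t) + (2 * t) ^ 2 / 8) := hmul
    _ = exp (t * m + t ^ 2 / 2) := by rw [← exp_add]; ring_nf



lemma hoeffding_one_sided {D : ℕ} (Y : Fin D → Ω → ℝ)
    (hmeas : ∀ i, Measurable (Y i)) (hindep : iIndepFun Y P)
    (hb : ∀ i ω, |Y i ω| ≤ 1) (m : ℝ) (hm : ∀ i, P[Y i] = m) (δ : ℝ) (hδ : 0 < δ) :
    P {ω | (D : ℝ) * m + (D : ℝ) * δ ≤ ∑ i, Y i ω} ≤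
      ENNReal.ofReal (exp (-(D : ℝ) * δ ^ 2 / 2)) := by
  have hSeq : (∑ i, Y i) = fun a => ∑ i, Y i a := funext fun a => Finset.sum_apply _ _ _
  have hSmeas : Measurable (∑ i, Y i) := by
    rw [hSeq]; exact Finset.measurable_sum Finset.univ (fun i _ => hmeas i)
  have hSb : ∀ ω, |(∑ i, Y i) ω| ≤ (D : ℝ) := by
    intro ω
    rw [Finset.sum_apply]
    calc |∑ i, Y i ω| ≤ ∑ i, |Y i ω| := Finset.abs_sum_le_sum_abs _ _
      _ ≤ ∑ _i : Fin D, (1:ℝ) := Finset.sum_le_sum fun i _ => hb i ω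
      _ = (D : ℝ) := by simp
  have hint : Integrable (fun ω => exp (δ * (∑ i, Y i) ω)) P := by
    refine integrable_of_bdd (by fun_prop) (C := exp (δ * D)) fun ω => ?_
    rw [abs_of_pos (exp_pos _)]
    exact exp_le_exp.2 (by
      calc δ * (∑ i, Y i) ω ≤ δ * |(∑ i, Y i) ω| := by
            nlinarith [le_abs_self ((∑ i, Y i) ω)]
        _ ≤ δ * D := by nlinarith [hSb ω])
  have chern := measure_ge_le_exp_mul_mgf (μ := P) (X := ∑ i, Y i)
    ((D : ℝ) * m + (D : ℝ) * δ) hδ.le hint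
  have hmgf : mgf (∑ i, Y i) P δ ≤ exp ((D : ℝ) * (δ * m + δ ^ 2 / 2)) := by
    rw [hindep.mgf_sum hmeas Finset.univ]
    calc ∏ i : Fin D, mgf (Y i) P δ ≤ ∏ _i : Fin D, exp (δ * m + δ ^ 2 / 2) := by
          exact Finset.prod_le_prod (fun i _ => mgf_nonneg)
            (fun i _ => (hm i) ▸ mgf_le_of_bdd (hmeas i) (hb i) δ)
      _ = exp ((D : ℝ) * (δ * m + δ ^ 2 / 2)) := by
          rw [Finset.prod_const, ← Real.exp_nat_mul]; simp [mul_comm]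
  have hfinal : (P {ω | (D : ℝ) * m + (D : ℝ) * δ ≤ (∑ i, Y i) ω}).toReal ≤
      exp (-(D : ℝ) * δ ^ 2 / 2) := by
    refine chern.trans ?_
    calc exp (-δ * ((D : ℝ) * m + (D : ℝ) * δ)) * mgf (∑ i, Y i) P δ
        ≤ exp (-δ * ((D : ℝ) * m + (D : ℝ) * δ)) * exp ((D : ℝ) * (δ * m + δ ^ 2 / 2)) := by
          gcongr
      _ = exp (-(D : ℝ) * δ ^ 2 / 2) := by rw [← exp_add]; ring_nf
  have hset : {ω | (D : ℝ) * m + (D : ℝ) * δ ≤ ∑ i, Y i ω} =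
      {ω | (D : ℝ) * m + (D : ℝ) * δ ≤ (∑ i, Y i) ω} := by
    ext ω; simp [Finset.sum_apply]
  rw [hset, ← ENNReal.ofReal_toReal (measure_ne_top P _)]
  exact ENNReal.ofReal_le_ofReal hfinal

lemma hoeffding_two_sided {D : ℕ} (hD : 1 ≤ D) (Y : Fin D → Ω → ℝ)
    (hmeas : ∀ i, Measurable (Y i)) (hindep : iIndepFun Y P)
    (hb : ∀ i ω, |Y i ω| ≤ 1) (m : ℝ) (hm : ∀ i, P[Y i] = m) (δ : ℝ) (hδ : 0 < δ) :
    P {ω | δ ≤ |(1 / (D : ℝ)) * ∑ i, Y i ω - m|} ≤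
      ENNReal.ofReal (2 * exp (-(D : ℝ) * δ ^ 2 / 2)) := by
  have hDpos : (0 : ℝ) < D := by exact_mod_cast hD
  have hneg_meas : ∀ i, Measurable (fun ω => -(Y i ω)) := fun i => (hmeas i).neg
  have hneg_indep : iIndepFun (fun i ω => -(Y i ω)) P := by
    exact hindep.comp (fun _ => fun x : ℝ => -x) (fun _ => measurable_neg)
  have hneg_b : ∀ i ω, |(-(Y i ω))| ≤ 1 := fun i ω => by rw [abs_neg]; exact hb i ω
  have hneg_m : ∀ i, P[fun ω => -(Y i ω)] = -m := fun i => by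
    rw [integral_neg, hm i]
  have h1 := hoeffding_one_sided Y hmeas hindep hb m hm δ hδ
  have h2 := hoeffding_one_sided (fun i ω => -(Y i ω)) hneg_meas hneg_indep hneg_b
    (-m) hneg_m δ hδ
  beta_reduce at h2
  have hsub : {ω | δ ≤ |(1 / (D : ℝ)) * ∑ i, Y i ω - m|} ⊆
      {ω | (D : ℝ) * m + (D : ℝ) * δ ≤ ∑ i, Y i ω} ∪
      {ω | (D : ℝ) * (-m) + (D : ℝ) * δ ≤ ∑ i, -(Y i ω)} := by
    intro ω hω
    simp only [Set.mem_setOf_eq] at hω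
    rcases le_abs.1 hω with h | h
    · left
      simp only [Set.mem_setOf_eq]
      have : δ + m ≤ (1 / (D : ℝ)) * ∑ i, Y i ω := by linarith
      calc (D : ℝ) * m + (D : ℝ) * δ = (D : ℝ) * (δ + m) := by ring
        _ ≤ (D : ℝ) * ((1 / (D : ℝ)) * ∑ i, Y i ω) := by nlinarith
        _ = ∑ i, Y i ω := by field_simp
    · right
      simp only [Set.mem_setOf_eq, Finset.sum_neg_distrib]
      have : δ - m ≤ -((1 / (D : ℝ)) * ∑ i, Y i ω) := by linarith
      calc (D : ℝ) * (-m) + (D : ℝ) * δ = (D : ℝ) * (δ - m) := by ring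
        _ ≤ (D : ℝ) * (-((1 / (D : ℝ)) * ∑ i, Y i ω)) := by nlinarith
        _ = -∑ i, Y i ω := by field_simp
  calc P {ω | δ ≤ |(1 / (D : ℝ)) * ∑ i, Y i ω - m|} ≤ _ := measure_mono hsub
    _ ≤ _ + _ := measure_union_le _ _
    _ ≤ ENNReal.ofReal (exp (-(D : ℝ) * δ ^ 2 / 2)) +
        ENNReal.ofReal (exp (-(D : ℝ) * δ ^ 2 / 2)) := add_le_add h1 h2
    _ = ENNReal.ofReal (2 * exp (-(D : ℝ) * δ ^ 2 / 2)) := by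
        rw [← ENNReal.ofReal_add (exp_pos _).le (exp_pos _).le]; ring_nf

end AuxHoeffding

/-- **Corollary 1 of the paper: pairwise random Fourier concentration.**
With iid random frequencies `u 1, …, u D` in `ℝ^d`, `Ĝ(v) = (1/D) ∑ᵢ cos⟨uᵢ, v⟩` and
`G(v) = E[cos⟨u₁, v⟩]`, the random Fourier estimate of the pairwise kernel
`k = G(x₁−x₁') + G(x₂−x₂') − G(x₁−x₂') − G(x₂−x₁')` deviates from `k` by at least `ε`
with probability at most `8·exp(−Dε²/32)`. -/
theorem rff_pairwise_concentration
    {Ω : Type*} [MeasurableSpace Ω] (P : Measure Ω) [IsProbabilityMeasure P]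
    (d D : ℕ) (hd : 1 ≤ d) (hD : 1 ≤ D)
    (u : Fin D → Ω → EuclideanSpace ℝ (Fin d))
    (hmeas : ∀ i, Measurable (u i))
    (hindep : iIndepFun u P)
    (hident : ∀ i j, IdentDistrib (u i) (u j) P P)
    (x₁ x₂ x₁' x₂' : EuclideanSpace ℝ (Fin d)) (ε : ℝ) (hε : 0 < ε)
    (Ghat : EuclideanSpace ℝ (Fin d) → Ω → ℝ)
    (hGhat : ∀ v ω, Ghat v ω = (1 / (D : ℝ)) * ∑ i, Real.cos ⟪u i ω, v⟫)
    (G : EuclideanSpace ℝ (Fin d) → ℝ)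
    (hG : ∀ v, G v = ∫ ω', Real.cos ⟪u ⟨0, hD⟩ ω', v⟫ ∂P) :
    P {ω | ε ≤ |(Ghat (x₁ - x₁') ω + Ghat (x₂ - x₂') ω
          - Ghat (x₁ - x₂') ω - Ghat (x₂ - x₁') ω)
        - (G (x₁ - x₁') + G (x₂ - x₂') - G (x₁ - x₂') - G (x₂ - x₁'))|} ≤
      ENNReal.ofReal (8 * Real.exp (-(D : ℝ) * ε ^ 2 / 32)) := by
  -- per-direction concentration
  have hcos_meas : ∀ v : EuclideanSpace ℝ (Fin d),
      Measurable (fun x : EuclideanSpace ℝ (Fin d) => Real.cos ⟪x, v⟫) := by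
    intro v
    exact (Real.continuous_cos.comp
      (Continuous.inner continuous_id continuous_const)).measurable
  have key : ∀ v : EuclideanSpace ℝ (Fin d),
      P {ω | ε / 4 ≤ |Ghat v ω - G v|} ≤
        ENNReal.ofReal (2 * exp (-(D : ℝ) * ε ^ 2 / 32)) := by
    intro v
    set Y : Fin D → Ω → ℝ := fun i ω => Real.cos ⟪u i ω, v⟫ with hY
    have hYmeas : ∀ i, Measurable (Y i) := fun i => (hcos_meas v).comp (hmeas i)
    have hYindep : iIndepFun Y P :=
      hindep.comp (fun _ => fun x => Real.cos ⟪x, v⟫) (fun _ => hcos_meas v)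
    have hYb : ∀ i ω, |Y i ω| ≤ 1 := fun i ω => Real.abs_cos_le_one _
    have hYm : ∀ i, P[Y i] = G v := by
      intro i
      rw [hG v]
      exact ((hident i ⟨0, hD⟩).comp (hcos_meas v)).integral_eq
    have h2 := hoeffding_two_sided hD Y hYmeas hYindep hYb (G v) hYm (ε / 4)
      (by positivity)
    have hsets : {ω | ε / 4 ≤ |Ghat v ω - G v|} =
        {ω | ε / 4 ≤ |(1 / (D : ℝ)) * ∑ i, Y i ω - G v|} := by
      ext ω; simp [hGhat v ω, hY]
    have hexp : -(D : ℝ) * (ε / 4) ^ 2 / 2 = -(D : ℝ) * ε ^ 2 / 32 := by ring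
    rw [hsets]
    rw [hexp] at h2
    exact h2
  -- union bound over the four directions
  set v₁ := x₁ - x₁'
  set v₂ := x₂ - x₂'
  set v₃ := x₁ - x₂'
  set v₄ := x₂ - x₁'
  have hsub : {ω | ε ≤ |(Ghat v₁ ω + Ghat v₂ ω - Ghat v₃ ω - Ghat v₄ ω)
        - (G v₁ + G v₂ - G v₃ - G v₄)|} ⊆
      {ω | ε / 4 ≤ |Ghat v₁ ω - G v₁|} ∪ ({ω | ε / 4 ≤ |Ghat v₂ ω - G v₂|} ∪
        ({ω | ε / 4 ≤ |Ghat v₃ ω - G v₃|} ∪ {ω | ε / 4 ≤ |Ghat v₄ ω - G v₄|})) := by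
    intro ω hω
    simp only [Set.mem_setOf_eq] at hω
    by_contra hc
    simp only [Set.mem_union, Set.mem_setOf_eq, not_or, not_le] at hc
    obtain ⟨h1, h2, h3, h4⟩ := hc
    have : |(Ghat v₁ ω + Ghat v₂ ω - Ghat v₃ ω - Ghat v₄ ω)
        - (G v₁ + G v₂ - G v₃ - G v₄)| ≤ |Ghat v₁ ω - G v₁| + |Ghat v₂ ω - G v₂|
        + |Ghat v₃ ω - G v₃| + |Ghat v₄ ω - G v₄| := by
      have e : (Ghat v₁ ω + Ghat v₂ ω - Ghat v₃ ω - Ghat v₄ ω)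
          - (G v₁ + G v₂ - G v₃ - G v₄) =
          (Ghat v₁ ω - G v₁) + (Ghat v₂ ω - G v₂)
          - (Ghat v₃ ω - G v₃) - (Ghat v₄ ω - G v₄) := by ring
      rw [e]
      calc |(Ghat v₁ ω - G v₁) + (Ghat v₂ ω - G v₂)
          - (Ghat v₃ ω - G v₃) - (Ghat v₄ ω - G v₄)|
          ≤ |(Ghat v₁ ω - G v₁) + (Ghat v₂ ω - G v₂) - (Ghat v₃ ω - G v₃)|
            + |Ghat v₄ ω - G v₄| := abs_sub _ _
        _ ≤ |(Ghat v₁ ω - G v₁) + (Ghat v₂ ω - G v₂)| + |Ghat v₃ ω - G v₃|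
            + |Ghat v₄ ω - G v₄| := by gcongr; exact abs_sub _ _
        _ ≤ |Ghat v₁ ω - G v₁| + |Ghat v₂ ω - G v₂| + |Ghat v₃ ω - G v₃|
            + |Ghat v₄ ω - G v₄| := by
              have := abs_add_le (Ghat v₁ ω - G v₁) (Ghat v₂ ω - G v₂)
              linarith
    linarith
  calc P _ ≤ _ := measure_mono hsub
    _ ≤ P {ω | ε / 4 ≤ |Ghat v₁ ω - G v₁|} + P ({ω | ε / 4 ≤ |Ghat v₂ ω - G v₂|} ∪
        ({ω | ε / 4 ≤ |Ghat v₃ ω - G v₃|} ∪ {ω | ε / 4 ≤ |Ghat v₄ ω - G v₄|})) :=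
        measure_union_le _ _
    _ ≤ P {ω | ε / 4 ≤ |Ghat v₁ ω - G v₁|} + (P {ω | ε / 4 ≤ |Ghat v₂ ω - G v₂|} +
        P ({ω | ε / 4 ≤ |Ghat v₃ ω - G v₃|} ∪ {ω | ε / 4 ≤ |Ghat v₄ ω - G v₄|})) := by
        gcongr; exact measure_union_le _ _
    _ ≤ P {ω | ε / 4 ≤ |Ghat v₁ ω - G v₁|} + (P {ω | ε / 4 ≤ |Ghat v₂ ω - G v₂|} +
        (P {ω | ε / 4 ≤ |Ghat v₃ ω - G v₃|} + P {ω | ε / 4 ≤ |Ghat v₄ ω - G v₄|})) := by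
        gcongr; exact measure_union_le _ _
    _ ≤ ENNReal.ofReal (2 * exp (-(D : ℝ) * ε ^ 2 / 32)) +
        (ENNReal.ofReal (2 * exp (-(D : ℝ) * ε ^ 2 / 32)) +
        (ENNReal.ofReal (2 * exp (-(D : ℝ) * ε ^ 2 / 32)) +
        ENNReal.ofReal (2 * exp (-(D : ℝ) * ε ^ 2 / 32)))) := by
        gcongr <;> exact key _
    _ = ENNReal.ofReal (8 * Real.exp (-(D : ℝ) * ε ^ 2 / 32)) := by
        rw [← ENNReal.ofReal_add (by positivity) (by positivity),
          ← ENNReal.ofReal_add (by positivity) (by positivity),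
          ← ENNReal.ofReal_add (by positivity) (by positivity)]
        ring_nf
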